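/- For every measurable f̂ : 𝒳 × 𝒲 → [0, ∞) (with ν̂(x) finite for P_X-a.e. x), the truncated density-ratio estimator satisfies the Lipschitz stability bound ‖r̂ − r‖_{L²(P)} ≤ C₁·‖f̂ − f‖_{L²(P)} with explicit constant C₁ := 2·e^{4τ}·|𝒲|^{1/2}·f_min^{−1/2}. -/

import Mathlib

open MeasureTheory
open scoped RealInnerProductSpace ENNReal NNReal

private lemma clamp_abs_le {a c lo hi : ℝ} (hlo : lo ≤ c) (hhi : c ≤ hi) :
    |min (max a lo) hi - c| ≤ |a - c| := by
  have h1 : a - c ≤ |a - c| := le_abs_self _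
  have h2 : c - a ≤ |a - c| := by rw [abs_sub_comm]; exact le_abs_self _
  have h0 : 0 ≤ |a - c| := abs_nonneg _
  rw [abs_sub_le_iff]
  constructor
  · rcases le_total a lo with h | h
    · rw [max_eq_right h, min_eq_left (hlo.trans hhi)]; linarith
    · rw [max_eq_left h]
      have := min_le_left a hi
      linarith
  · rcases le_total a hi with h | h
    · have : a ≤ min (max a lo) hi := le_min (le_max_left _ _) h
      linarith
    · have : hi ≤ min (max a lo) hi := le_min (le_trans h (le_max_left _ _)) le_rfl
      linarith

private lemma sq_lintegral_le {α : Type*} [MeasurableSpace α] (μ : Measure α)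
    {h : α → ℝ≥0∞} (hh : AEMeasurable h μ) :
    (∫⁻ a, h a ∂μ) ^ 2 ≤ μ Set.univ * ∫⁻ a, h a ^ 2 ∂μ := by
  have hpq : Real.HolderConjugate 2 2 := .two_two
  have H := ENNReal.lintegral_mul_le_Lp_mul_Lq μ hpq hh
    (aemeasurable_const : AEMeasurable (fun _ : α => (1 : ℝ≥0∞)) μ)
  simp only [Pi.mul_apply, mul_one, ENNReal.one_rpow, one_pow, lintegral_const, one_mul,
    ENNReal.rpow_two] at H
  calc (∫⁻ a, h a ∂μ) ^ 2
      ≤ ((∫⁻ a, h a ^ 2 ∂μ) ^ (1 / 2 : ℝ) * (μ Set.univ) ^ (1 / 2 : ℝ)) ^ 2 := by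
        gcongr
    _ = μ Set.univ * ∫⁻ a, h a ^ 2 ∂μ := by
        rw [mul_pow, ← ENNReal.rpow_two ((∫⁻ a, h a ^ 2 ∂μ) ^ (1 / 2 : ℝ)),
          ← ENNReal.rpow_two ((μ Set.univ) ^ (1 / 2 : ℝ)),
          ← ENNReal.rpow_mul, ← ENNReal.rpow_mul]
        norm_num [ENNReal.rpow_one, mul_comm]

set_option maxHeartbeats 1600000 in
/-- Lipschitz stability of the truncated density-ratio estimator: with
`ν(x) = ∫_𝒲 exp⟨δ,s(x,w)⟩ f(x,w) dw`, `ν̂(x) = ∫_𝒲 exp⟨δ,s(x,w)⟩ f̂(x,w) dw`,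
truncation `ν̂† = min(max(ν̂, e^{−τ}/2), 2e^{τ})` for `τ = Δ·M_s`, and density
ratios `r = exp⟨δ,s⟩/ν`, `r̂ = exp⟨δ,s⟩/ν̂†`, one has
`‖r̂ − r‖_{L²(P)} ≤ C₁·‖f̂ − f‖_{L²(P)}` with
`C₁ = 2·e^{4τ}·|𝒲|^{1/2}·f_min^{−1/2}`, where `P` has density `f` with
respect to `P_X ⊗ Lebesgue` on `𝒳 × 𝒲`. -/
theorem truncated_density_ratio_lipschitz_stability
    {X : Type*} [MeasurableSpace X] (PX : Measure X) [IsProbabilityMeasure PX]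
    {q : ℕ} (Wset : Set (EuclideanSpace ℝ (Fin q)))
    (hWmeas : MeasurableSet Wset) (hWvol : MeasureTheory.volume Wset < ⊤)
    (f : X × EuclideanSpace ℝ (Fin q) → ℝ) (hf_meas : Measurable f)
    (fmin fmax : ℝ) (hfmin : 0 < fmin)
    (hf_bdd : ∀ x w, w ∈ Wset → fmin ≤ f (x, w) ∧ f (x, w) ≤ fmax)
    (hf_int : ∀ᵐ x ∂PX, ∫ w in Wset, f (x, w) = 1)
    (s : X × EuclideanSpace ℝ (Fin q) → EuclideanSpace ℝ (Fin q))
    (hs_meas : Measurable s) (Ms : ℝ) (hs_bdd : ∀ p, ‖s p‖ ≤ Ms)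
    (δ : EuclideanSpace ℝ (Fin q)) (Δ : ℝ) (hδ : ‖δ‖ ≤ Δ)
    (fhat : X × EuclideanSpace ℝ (Fin q) → ℝ)
    (hfhat_meas : Measurable fhat) (hfhat_nonneg : ∀ p, 0 ≤ fhat p)
    (hνhat_fin : ∀ᵐ x ∂PX,
      IntegrableOn (fun w => Real.exp ⟪δ, s (x, w)⟫ * fhat (x, w)) Wset) :
    ∀ (Pm : Measure (X × EuclideanSpace ℝ (Fin q))),
      Pm = (PX.prod (MeasureTheory.volume.restrict Wset)).withDensity
            (fun p => ENNReal.ofReal (f p)) →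
    ∀ ν νhat νdag : X → ℝ,
      (∀ x, ν x = ∫ w in Wset, Real.exp ⟪δ, s (x, w)⟫ * f (x, w)) →
      (∀ x, νhat x = ∫ w in Wset, Real.exp ⟪δ, s (x, w)⟫ * fhat (x, w)) →
      (∀ x, νdag x = min (max (νhat x) (Real.exp (-(Δ * Ms)) / 2))
          (2 * Real.exp (Δ * Ms))) →
      eLpNorm (fun p => Real.exp ⟪δ, s p⟫ / νdag p.1
          - Real.exp ⟪δ, s p⟫ / ν p.1) 2 Pm
        ≤ ENNReal.ofReal (2 * Real.exp (4 * (Δ * Ms))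
            * Real.sqrt (MeasureTheory.volume Wset).toReal / Real.sqrt fmin)
          * eLpNorm (fun p => fhat p - f p) 2 Pm := by
  intro Pm hPm ν νhat νdag hν hνhat hνdag
  set τ := Δ * Ms with hτdef
  -- X is nonempty since it carries a probability measure
  have hXne : Nonempty X := by
    by_contra h
    rw [not_nonempty_iff] at h
    have h0 : PX Set.univ = 0 := by
      rw [Set.univ_eq_empty_iff.mpr h]; simp
    rw [measure_univ] at h0; exact one_ne_zero h0
  obtain ⟨x0⟩ := hXne
  have hΔ0 : 0 ≤ Δ := le_trans (norm_nonneg _) hδ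
  have hMs0 : 0 ≤ Ms := le_trans (norm_nonneg _) (hs_bdd (x0, 0))
  have hτ0 : 0 ≤ τ := mul_nonneg hΔ0 hMs0
  -- bounds on the exponential weight
  have hexp_bdd : ∀ p, Real.exp (-τ) ≤ Real.exp ⟪δ, s p⟫ ∧
      Real.exp ⟪δ, s p⟫ ≤ Real.exp τ := by
    intro p
    have h1 : |⟪δ, s p⟫| ≤ τ := by
      calc |⟪δ, s p⟫| ≤ ‖δ‖ * ‖s p‖ := abs_real_inner_le_norm δ (s p)
        _ ≤ Δ * Ms := mul_le_mul hδ (hs_bdd p) (norm_nonneg _) hΔ0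
    exact ⟨Real.exp_le_exp.2 (neg_le_of_abs_le h1), Real.exp_le_exp.2 (le_of_abs_le h1)⟩
  -- measurability
  have hE_meas : Measurable fun p : X × EuclideanSpace ℝ (Fin q) =>
      Real.exp ⟪δ, s p⟫ :=
    Real.measurable_exp.comp
      (((continuous_const : Continuous fun _ : EuclideanSpace ℝ (Fin q) => δ).inner
        continuous_id).measurable.comp hs_meas)
  have hν_meas : Measurable ν := by
    have hfun : ν = fun x => ∫ w, (fun p : X × EuclideanSpace ℝ (Fin q) =>
        Real.exp ⟪δ, s p⟫ * f p) (x, w) ∂(volume.restrict Wset) := funext hν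
    rw [hfun]
    exact ((hE_meas.mul hf_meas).stronglyMeasurable.integral_prod_right').measurable
  have hνhat_meas : Measurable νhat := by
    have hfun : νhat = fun x => ∫ w, (fun p : X × EuclideanSpace ℝ (Fin q) =>
        Real.exp ⟪δ, s p⟫ * fhat p) (x, w) ∂(volume.restrict Wset) := funext hνhat
    rw [hfun]
    exact ((hE_meas.mul hfhat_meas).stronglyMeasurable.integral_prod_right').measurable
  have hνdag_meas : Measurable νdag := by
    have hfun : νdag = fun x => min (max (νhat x) (Real.exp (-τ) / 2))
        (2 * Real.exp τ) := funext hνdag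
    rw [hfun]
    exact (hνhat_meas.max measurable_const).min measurable_const
  -- bounds on νdag
  have hlohi : Real.exp (-τ) / 2 ≤ 2 * Real.exp τ := by
    have := Real.exp_le_exp.mpr (show -τ ≤ τ by linarith)
    have := Real.exp_pos τ
    linarith
  have hνdag_lb : ∀ x, Real.exp (-τ) / 2 ≤ νdag x := fun x => by
    rw [hνdag]; exact le_min (le_max_right _ _) hlohi
  have hνdag_ub : ∀ x, νdag x ≤ 2 * Real.exp τ := fun x => by
    rw [hνdag]; exact min_le_right _ _
  have hνdag_pos : ∀ x, 0 < νdag x := fun x =>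
    lt_of_lt_of_le (by positivity) (hνdag_lb x)
  -- integrability of f and E·f on Wset, for every x
  have hf_intOn : ∀ x, IntegrableOn (fun w => f (x, w)) Wset := by
    intro x
    apply Integrable.mono' (g := fun _ => fmax)
      (integrableOn_const hWvol.ne)
      (((hf_meas.comp measurable_prodMk_left).aestronglyMeasurable :
        AEStronglyMeasurable (fun w => f (x, w)) (volume.restrict Wset)))
    refine (ae_restrict_iff' hWmeas).2 (Filter.Eventually.of_forall fun w hw => ?_)
    show ‖f (x, w)‖ ≤ fmax
    rw [Real.norm_eq_abs, abs_of_nonneg (le_trans hfmin.le (hf_bdd x w hw).1)]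
    exact (hf_bdd x w hw).2
  have hEf_intOn : ∀ x, IntegrableOn
      (fun w => Real.exp ⟪δ, s (x, w)⟫ * f (x, w)) Wset := by
    intro x
    apply Integrable.mono' (g := fun _ => Real.exp τ * fmax)
      (integrableOn_const hWvol.ne)
      ((((hE_meas.mul hf_meas).comp measurable_prodMk_left).aestronglyMeasurable :
        AEStronglyMeasurable (fun w => Real.exp ⟪δ, s (x, w)⟫ * f (x, w))
          (volume.restrict Wset)))
    refine (ae_restrict_iff' hWmeas).2 (Filter.Eventually.of_forall fun w hw => ?_)
    have h1 := hf_bdd x w hw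
    have h2 := hexp_bdd (x, w)
    have hfpos : 0 ≤ f (x, w) := le_trans hfmin.le h1.1
    show ‖Real.exp ⟪δ, s (x, w)⟫ * f (x, w)‖ ≤ Real.exp τ * fmax
    rw [Real.norm_eq_abs, abs_of_nonneg (mul_nonneg (Real.exp_pos _).le hfpos)]
    nlinarith [h2.2, h1.2, Real.exp_pos τ, Real.exp_pos ⟪δ, s (x, w)⟫]
  -- bounds on ν for good x
  have hν_bounds : ∀ x, (∫ w in Wset, f (x, w)) = 1 →
      Real.exp (-τ) ≤ ν x ∧ ν x ≤ Real.exp τ := by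
    intro x hx1
    constructor
    · have hle : ∫ w in Wset, Real.exp (-τ) * f (x, w)
          ≤ ∫ w in Wset, Real.exp ⟪δ, s (x, w)⟫ * f (x, w) :=
        setIntegral_mono_on ((hf_intOn x).const_mul _) (hEf_intOn x) hWmeas
          (fun w hw => mul_le_mul_of_nonneg_right (hexp_bdd (x, w)).1
            (le_trans hfmin.le (hf_bdd x w hw).1))
      rw [integral_const_mul, hx1, mul_one] at hle
      rw [hν]; exact hle
    · have hle : ∫ w in Wset, Real.exp ⟪δ, s (x, w)⟫ * f (x, w)
          ≤ ∫ w in Wset, Real.exp τ * f (x, w) :=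
        setIntegral_mono_on (hEf_intOn x) ((hf_intOn x).const_mul _) hWmeas
          (fun w hw => mul_le_mul_of_nonneg_right (hexp_bdd (x, w)).2
            (le_trans hfmin.le (hf_bdd x w hw).1))
      rw [integral_const_mul, hx1, mul_one] at hle
      rw [hν]; exact hle
  set C₁ : ℝ := 2 * Real.exp (4 * τ) * Real.sqrt (volume Wset).toReal
      / Real.sqrt fmin with hC₁def
  have hC₁0 : 0 ≤ C₁ := by positivity
  rw [eLpNorm_eq_lintegral_rpow_enorm_toReal (by norm_num) (by norm_num),
      eLpNorm_eq_lintegral_rpow_enorm_toReal (by norm_num) (by norm_num)]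
  simp only [ENNReal.toReal_ofNat, ENNReal.rpow_two]
  have hg_meas : Measurable fun p : X × EuclideanSpace ℝ (Fin q) =>
      Real.exp ⟪δ, s p⟫ / νdag p.1 - Real.exp ⟪δ, s p⟫ / ν p.1 :=
    (hE_meas.div (hνdag_meas.comp measurable_fst)).sub
      (hE_meas.div (hν_meas.comp measurable_fst))
  have key : (∫⁻ p, (‖Real.exp ⟪δ, s p⟫ / νdag p.1
          - Real.exp ⟪δ, s p⟫ / ν p.1‖₊ : ℝ≥0∞) ^ 2 ∂Pm)
      ≤ ENNReal.ofReal (C₁ ^ 2) * ∫⁻ p, (‖fhat p - f p‖₊ : ℝ≥0∞) ^ 2 ∂Pm := by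
    rw [hPm]
    have hgN : Measurable fun p : X × EuclideanSpace ℝ (Fin q) =>
        (‖Real.exp ⟪δ, s p⟫ / νdag p.1 - Real.exp ⟪δ, s p⟫ / ν p.1‖₊ : ℝ≥0∞) ^ 2 :=
      (hg_meas.nnnorm.coe_nnreal_ennreal).pow_const 2
    have hhN : Measurable fun p : X × EuclideanSpace ℝ (Fin q) =>
        (‖fhat p - f p‖₊ : ℝ≥0∞) ^ 2 :=
      ((hfhat_meas.sub hf_meas).nnnorm.coe_nnreal_ennreal).pow_const 2
    rw [lintegral_withDensity_eq_lintegral_mul _ hf_meas.ennreal_ofReal hgN,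
        lintegral_withDensity_eq_lintegral_mul _ hf_meas.ennreal_ofReal hhN]
    simp only [Pi.mul_apply]
    rw [MeasureTheory.lintegral_prod (fun p => ENNReal.ofReal (f p) *
          (‖Real.exp ⟪δ, s p⟫ / νdag p.1 - Real.exp ⟪δ, s p⟫ / ν p.1‖₊ : ℝ≥0∞) ^ 2)
          ((hf_meas.ennreal_ofReal.mul hgN).aemeasurable),
        MeasureTheory.lintegral_prod (fun p => ENNReal.ofReal (f p) *
          (‖fhat p - f p‖₊ : ℝ≥0∞) ^ 2) ((hf_meas.ennreal_ofReal.mul hhN).aemeasurable)]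
    simp only [← enorm_eq_nnnorm, Real.enorm_eq_ofReal_abs]
    rw [← lintegral_const_mul' (ENNReal.ofReal (C₁ ^ 2)) _ ENNReal.ofReal_ne_top]
    apply lintegral_mono_ae
    filter_upwards [hf_int, hνhat_fin] with x hx1 hx2
    -- per-x inequality
    obtain ⟨hν_lb, hν_ub⟩ := hν_bounds x hx1
    have hν_pos : 0 < ν x := lt_of_lt_of_le (Real.exp_pos _) hν_lb
    have hd := hνdag_pos x
    have hfhat_intOn : IntegrableOn (fun w => fhat (x, w)) Wset := by
      apply Integrable.mono' (hx2.const_mul (Real.exp τ))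
        (((hfhat_meas.comp measurable_prodMk_left).aestronglyMeasurable :
          AEStronglyMeasurable (fun w => fhat (x, w)) (volume.restrict Wset)))
      refine (ae_restrict_iff' hWmeas).2 (Filter.Eventually.of_forall fun w _ => ?_)
      show ‖fhat (x, w)‖ ≤ Real.exp τ * (Real.exp ⟪δ, s (x, w)⟫ * fhat (x, w))
      rw [Real.norm_eq_abs, abs_of_nonneg (hfhat_nonneg _)]
      have h2 := (hexp_bdd (x, w)).1
      have h3 := hfhat_nonneg (x, w)
      have hprod : Real.exp τ * Real.exp (-τ) = 1 := by
        rw [← Real.exp_add]; simp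
      nlinarith [mul_nonneg (mul_nonneg (sub_nonneg.2 h2) (Real.exp_pos τ).le) h3]
    set Dx := |νhat x - ν x| with hDxdef
    have hDx0 : 0 ≤ Dx := abs_nonneg _
    set J := ∫ w in Wset, |fhat (x, w) - f (x, w)| with hJdef
    have hJ0 : 0 ≤ J := integral_nonneg fun w => abs_nonneg _
    have hD_le : Dx ≤ Real.exp τ * J := by
      rw [hDxdef, hνhat, hν, ← integral_sub hx2 (hEf_intOn x)]
      calc |∫ w in Wset, (Real.exp ⟪δ, s (x, w)⟫ * fhat (x, w)
              - Real.exp ⟪δ, s (x, w)⟫ * f (x, w))|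
          ≤ ∫ w in Wset, |Real.exp ⟪δ, s (x, w)⟫ * fhat (x, w)
              - Real.exp ⟪δ, s (x, w)⟫ * f (x, w)| := by
            simpa [Real.norm_eq_abs] using
              norm_integral_le_integral_norm (μ := volume.restrict Wset)
                (fun w => Real.exp ⟪δ, s (x, w)⟫ * fhat (x, w)
                  - Real.exp ⟪δ, s (x, w)⟫ * f (x, w))
        _ ≤ ∫ w in Wset, Real.exp τ * |fhat (x, w) - f (x, w)| := by
            apply setIntegral_mono_on (hx2.sub (hEf_intOn x)).abs
              (((hfhat_intOn.sub (hf_intOn x)).abs).const_mul _) hWmeas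
            intro w hw
            show |Real.exp ⟪δ, s (x, w)⟫ * fhat (x, w)
                - Real.exp ⟪δ, s (x, w)⟫ * f (x, w)|
              ≤ Real.exp τ * |fhat (x, w) - f (x, w)|
            rw [← mul_sub, abs_mul, abs_of_pos (Real.exp_pos _)]
            exact mul_le_mul_of_nonneg_right (hexp_bdd (x, w)).2 (abs_nonneg _)
        _ = Real.exp τ * J := by rw [hJdef, integral_const_mul]
    -- pointwise bound on the ratio difference
    have hclamp : |νdag x - ν x| ≤ Dx := by
      rw [hνdag]
      have h1 : Real.exp (-τ) / 2 ≤ ν x :=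
        le_trans (by linarith [Real.exp_pos (-τ)]) hν_lb
      have h2 : ν x ≤ 2 * Real.exp τ :=
        le_trans hν_ub (by linarith [Real.exp_pos τ])
      exact clamp_abs_le h1 h2
    have hgw : ∀ w : EuclideanSpace ℝ (Fin q),
        |Real.exp ⟪δ, s (x, w)⟫ / νdag x - Real.exp ⟪δ, s (x, w)⟫ / ν x|
          ≤ 2 * Real.exp (3 * τ) * Dx := by
      intro w
      have hE2 := (hexp_bdd (x, w)).2
      have heq : Real.exp ⟪δ, s (x, w)⟫ / νdag x - Real.exp ⟪δ, s (x, w)⟫ / ν x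
          = Real.exp ⟪δ, s (x, w)⟫ * (ν x - νdag x) / (νdag x * ν x) := by
        field_simp
      rw [heq, abs_div, abs_mul, abs_of_pos (mul_pos hd hν_pos),
        abs_of_pos (Real.exp_pos _), div_le_iff₀ (mul_pos hd hν_pos)]
      have h1 : |ν x - νdag x| ≤ Dx := by rw [abs_sub_comm]; exact hclamp
      have hA : Real.exp ⟪δ, s (x, w)⟫ * |ν x - νdag x| ≤ Real.exp τ * Dx :=
        mul_le_mul hE2 h1 (abs_nonneg _) (Real.exp_pos τ).le
      have hexp3 : Real.exp (3 * τ) * (Real.exp (-τ) / 2 * Real.exp (-τ))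
          = Real.exp τ / 2 := by
        rw [show Real.exp (3 * τ) * (Real.exp (-τ) / 2 * Real.exp (-τ))
            = Real.exp (3 * τ) * Real.exp (-τ) * Real.exp (-τ) / 2 by ring,
          ← Real.exp_add, ← Real.exp_add, show 3 * τ + -τ + -τ = τ by ring]
      have hν2 : Real.exp (-τ) / 2 * Real.exp (-τ) ≤ νdag x * ν x :=
        mul_le_mul (hνdag_lb x) hν_lb (Real.exp_pos _).le hd.le
      have hB : Real.exp τ * Dx ≤ 2 * Real.exp (3 * τ) * Dx * (νdag x * ν x) := by
        calc Real.exp τ * Dx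
            = 2 * Real.exp (3 * τ) * Dx * (Real.exp (-τ) / 2 * Real.exp (-τ)) := by
              rw [show 2 * Real.exp (3 * τ) * Dx * (Real.exp (-τ) / 2 * Real.exp (-τ))
                  = 2 * Dx * (Real.exp (3 * τ) * (Real.exp (-τ) / 2 * Real.exp (-τ)))
                  by ring, hexp3]
              ring
          _ ≤ 2 * Real.exp (3 * τ) * Dx * (νdag x * ν x) := by
              apply mul_le_mul_of_nonneg_left hν2 (by positivity)
      linarith
    -- the inner integral bounds
    have hf_lint_one : (∫⁻ w in Wset, ENNReal.ofReal (f (x, w))) = 1 := by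
      rw [← ofReal_integral_eq_lintegral_ofReal (hf_intOn x)
        ((ae_restrict_iff' hWmeas).2 (Filter.Eventually.of_forall
          fun w hw => le_trans hfmin.le (hf_bdd x w hw).1)), hx1, ENNReal.ofReal_one]
    have hI1 : (∫⁻ w in Wset, ENNReal.ofReal (f (x, w))
          * ENNReal.ofReal |Real.exp ⟪δ, s (x, w)⟫ / νdag x
            - Real.exp ⟪δ, s (x, w)⟫ / ν x| ^ 2)
        ≤ ENNReal.ofReal ((2 * Real.exp (3 * τ)) ^ 2 * Dx ^ 2) := by
      calc (∫⁻ w in Wset, ENNReal.ofReal (f (x, w))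
              * ENNReal.ofReal |Real.exp ⟪δ, s (x, w)⟫ / νdag x
                - Real.exp ⟪δ, s (x, w)⟫ / ν x| ^ 2)
          ≤ ∫⁻ w in Wset, ENNReal.ofReal (f (x, w))
              * ENNReal.ofReal ((2 * Real.exp (3 * τ)) ^ 2 * Dx ^ 2) := by
            apply lintegral_mono
            intro w
            apply mul_le_mul_right
            rw [← ENNReal.ofReal_pow (abs_nonneg _)]
            apply ENNReal.ofReal_le_ofReal
            rw [mul_pow]
            have := hgw w
            nlinarith [abs_nonneg (Real.exp ⟪δ, s (x, w)⟫ / νdag x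
              - Real.exp ⟪δ, s (x, w)⟫ / ν x), hDx0,
              mul_nonneg (mul_nonneg (by positivity : (0:ℝ) ≤ 2 * Real.exp (3*τ)) hDx0)
                (abs_nonneg (Real.exp ⟪δ, s (x, w)⟫ / νdag x
                  - Real.exp ⟪δ, s (x, w)⟫ / ν x))]
        _ = (∫⁻ w in Wset, ENNReal.ofReal (f (x, w)))
              * ENNReal.ofReal ((2 * Real.exp (3 * τ)) ^ 2 * Dx ^ 2) :=
            lintegral_mul_const _ ((hf_meas.comp measurable_prodMk_left).ennreal_ofReal)
        _ = ENNReal.ofReal ((2 * Real.exp (3 * τ)) ^ 2 * Dx ^ 2) := by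
            rw [hf_lint_one, one_mul]
    have hL : ENNReal.ofReal J = ∫⁻ w in Wset, ENNReal.ofReal |fhat (x, w) - f (x, w)| :=
      ofReal_integral_eq_lintegral_ofReal ((hfhat_intOn.sub (hf_intOn x)).abs)
        (Filter.Eventually.of_forall fun w => abs_nonneg _)
    have hCS : (ENNReal.ofReal J) ^ 2
        ≤ volume Wset * ∫⁻ w in Wset, ENNReal.ofReal |fhat (x, w) - f (x, w)| ^ 2 := by
      rw [hL]
      have hm : AEMeasurable (fun w : EuclideanSpace ℝ (Fin q) =>
          ENNReal.ofReal |fhat (x, w) - f (x, w)|) (volume.restrict Wset) :=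
        ((((hfhat_meas.sub hf_meas).comp measurable_prodMk_left).abs.ennreal_ofReal).aemeasurable :
          AEMeasurable (fun w : EuclideanSpace ℝ (Fin q) =>
            ENNReal.ofReal |fhat (x, w) - f (x, w)|) (volume.restrict Wset))
      have := sq_lintegral_le (volume.restrict Wset) hm
      rwa [Measure.restrict_apply_univ] at this
    have hWeight : (∫⁻ w in Wset, ENNReal.ofReal |fhat (x, w) - f (x, w)| ^ 2)
        ≤ ENNReal.ofReal fmin⁻¹ * ∫⁻ w in Wset, ENNReal.ofReal (f (x, w))
            * ENNReal.ofReal |fhat (x, w) - f (x, w)| ^ 2 := by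
      rw [← lintegral_const_mul' _ _ ENNReal.ofReal_ne_top]
      apply lintegral_mono_ae
      refine (ae_restrict_iff' hWmeas).2 (Filter.Eventually.of_forall fun w hw => ?_)
      have hf1 : (1 : ℝ≥0∞) ≤ ENNReal.ofReal fmin⁻¹ * ENNReal.ofReal (f (x, w)) := by
        rw [← ENNReal.ofReal_mul (by positivity), ← ENNReal.ofReal_one]
        apply ENNReal.ofReal_le_ofReal
        rw [inv_mul_eq_div, le_div_iff₀ hfmin, one_mul]
        exact (hf_bdd x w hw).1
      calc ENNReal.ofReal |fhat (x, w) - f (x, w)| ^ 2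
          = 1 * ENNReal.ofReal |fhat (x, w) - f (x, w)| ^ 2 := (one_mul _).symm
        _ ≤ ENNReal.ofReal fmin⁻¹ * ENNReal.ofReal (f (x, w))
              * ENNReal.ofReal |fhat (x, w) - f (x, w)| ^ 2 := mul_le_mul_left hf1 _
        _ = ENNReal.ofReal fmin⁻¹ * (ENNReal.ofReal (f (x, w))
              * ENNReal.ofReal |fhat (x, w) - f (x, w)| ^ 2) := mul_assoc _ _ _
    -- assemble
    have hconst : ENNReal.ofReal ((2 * Real.exp (3 * τ)) ^ 2)
          * ENNReal.ofReal (Real.exp τ ^ 2)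
          * (volume Wset * ENNReal.ofReal fmin⁻¹)
        = ENNReal.ofReal (C₁ ^ 2) := by
      rw [← ENNReal.ofReal_toReal hWvol.ne,
        ← ENNReal.ofReal_mul (by positivity : (0:ℝ) ≤ (volume Wset).toReal),
        ← ENNReal.ofReal_mul (by positivity : (0:ℝ) ≤ (2 * Real.exp (3 * τ)) ^ 2),
        ← ENNReal.ofReal_mul (by positivity)]
      congr 1
      have he : Real.exp (3 * τ) * Real.exp τ = Real.exp (4 * τ) := by
        rw [← Real.exp_add]; ring_nf
      rw [hC₁def, div_pow, mul_pow, mul_pow, Real.sq_sqrt hfmin.le,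
        Real.sq_sqrt ENNReal.toReal_nonneg, ← he]
      ring
    calc (∫⁻ w in Wset, ENNReal.ofReal (f (x, w))
            * ENNReal.ofReal |Real.exp ⟪δ, s (x, w)⟫ / νdag x
              - Real.exp ⟪δ, s (x, w)⟫ / ν x| ^ 2)
        ≤ ENNReal.ofReal ((2 * Real.exp (3 * τ)) ^ 2 * Dx ^ 2) := hI1
      _ = ENNReal.ofReal ((2 * Real.exp (3 * τ)) ^ 2) * ENNReal.ofReal Dx ^ 2 := by
          rw [← ENNReal.ofReal_pow hDx0, ← ENNReal.ofReal_mul (by positivity)]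
      _ ≤ ENNReal.ofReal ((2 * Real.exp (3 * τ)) ^ 2)
            * ENNReal.ofReal (Real.exp τ * J) ^ 2 := by
          gcongr
      _ = ENNReal.ofReal ((2 * Real.exp (3 * τ)) ^ 2)
            * ENNReal.ofReal (Real.exp τ ^ 2) * ENNReal.ofReal J ^ 2 := by
          rw [ENNReal.ofReal_mul (Real.exp_pos τ).le,
            mul_pow (ENNReal.ofReal (Real.exp τ)) (ENNReal.ofReal J) 2,
            ← ENNReal.ofReal_pow (Real.exp_pos τ).le, mul_assoc]
      _ ≤ ENNReal.ofReal ((2 * Real.exp (3 * τ)) ^ 2)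
            * ENNReal.ofReal (Real.exp τ ^ 2)
            * (volume Wset * (ENNReal.ofReal fmin⁻¹
              * ∫⁻ w in Wset, ENNReal.ofReal (f (x, w))
                * ENNReal.ofReal |fhat (x, w) - f (x, w)| ^ 2)) := by
          apply mul_le_mul_right
          calc ENNReal.ofReal J ^ 2
              ≤ volume Wset * ∫⁻ w in Wset, ENNReal.ofReal |fhat (x, w) - f (x, w)| ^ 2 :=
                hCS
            _ ≤ volume Wset * (ENNReal.ofReal fmin⁻¹
                  * ∫⁻ w in Wset, ENNReal.ofReal (f (x, w))
                    * ENNReal.ofReal |fhat (x, w) - f (x, w)| ^ 2) :=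
                mul_le_mul_right hWeight _
      _ = ENNReal.ofReal (C₁ ^ 2) * ∫⁻ w in Wset, ENNReal.ofReal (f (x, w))
            * ENNReal.ofReal |fhat (x, w) - f (x, w)| ^ 2 := by
          rw [← hconst]; ring
  calc (∫⁻ p, (‖Real.exp ⟪δ, s p⟫ / νdag p.1
          - Real.exp ⟪δ, s p⟫ / ν p.1‖₊ : ℝ≥0∞) ^ 2 ∂Pm) ^ (1 / 2 : ℝ)
      ≤ (ENNReal.ofReal (C₁ ^ 2)
          * ∫⁻ p, (‖fhat p - f p‖₊ : ℝ≥0∞) ^ 2 ∂Pm) ^ (1 / 2 : ℝ) :=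
        ENNReal.rpow_le_rpow key (by norm_num)
    _ = ENNReal.ofReal C₁ * (∫⁻ p, (‖fhat p - f p‖₊ : ℝ≥0∞) ^ 2 ∂Pm) ^ (1 / 2 : ℝ) := by
        rw [ENNReal.mul_rpow_of_nonneg _ _ (by norm_num : (0:ℝ) ≤ 1 / 2),
          ENNReal.ofReal_rpow_of_nonneg (by positivity) (by norm_num),
          ← Real.sqrt_eq_rpow, Real.sqrt_sq hC₁0]
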